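/- Every x ∈ c₀(Ω) has the representation x = Σ_k E_k t^(k) converging in the norm of c₀(Ω), where E_k = (Ωx)_k and t^(k) is the sequence with t^(k)_k = 1/k, t^(k)_{k+1} = −1/(k+1), 0 otherwise; i.e., ‖x − Σ_{k=1}^n E_k t^(k)‖ → 0 as n → ∞, where ‖y‖ = sup_m |(Ωy)_m|. Moreover the coefficients E_k are uniquely determined. -/

import Mathlib

open Filter Finset Topology

noncomputable def OmegaT (x : ℕ → ℝ) (n : ℕ) : ℝ := ∑ j ∈ Finset.Icc 1 n, (j : ℝ) * x j

noncomputable def tBasis (k : ℕ) : ℕ → ℝ := fun n =>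
  if n = k then 1 / k else if n = k + 1 then -(1 / (k + 1 : ℝ)) else 0

noncomputable def omegaNorm (y : ℕ → ℝ) : ℝ := ⨆ m : ℕ, |OmegaT y m|

lemma omegaT_tBasis (k : ℕ) (hk : 1 ≤ k) (m : ℕ) :
    OmegaT (tBasis k) m = if m = k then 1 else 0 := by
  induction m with
  | zero =>
    have h0 : ¬ ((0:ℕ) = k) := by omega
    simp [OmegaT, h0]
  | succ m ih =>
    unfold OmegaT at ih ⊢
    rw [Finset.sum_Icc_succ_top (by omega)]
    rw [ih]
    unfold tBasis
    by_cases h1 : m + 1 = k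
    · have : m ≠ k := by omega
      simp [h1, this]
      have : (k:ℝ) ≠ 0 := by positivity
      field_simp
    · by_cases h2 : m = k
      · have h3 : m + 1 = k + 1 := by omega
        simp [h1, h2, h3]
        have : (k:ℝ) + 1 ≠ 0 := by positivity
        field_simp
        norm_num
      · have h3 : m + 1 ≠ k + 1 := by omega
        simp [h1, h2, h3]

lemma omegaT_sub (x y : ℕ → ℝ) (m : ℕ) :
    OmegaT (x - y) m = OmegaT x m - OmegaT y m := by
  simp [OmegaT, mul_sub, Finset.sum_sub_distrib]

lemma omegaT_partial (E : ℕ → ℝ) (n m : ℕ) :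
    OmegaT (fun j => ∑ k ∈ Finset.Icc 1 n, E k * tBasis k j) m
      = if m ∈ Finset.Icc 1 n then E m else 0 := by
  unfold OmegaT
  have : ∀ j ∈ Finset.Icc 1 m, (j:ℝ) * ∑ k ∈ Finset.Icc 1 n, E k * tBasis k j
      = ∑ k ∈ Finset.Icc 1 n, E k * ((j:ℝ) * tBasis k j) := by
    intro j _
    rw [Finset.mul_sum]; congr 1; ext k; ring
  rw [Finset.sum_congr rfl this, Finset.sum_comm]
  have : ∀ k ∈ Finset.Icc 1 n, ∑ j ∈ Finset.Icc 1 m, E k * ((j:ℝ) * tBasis k j)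
      = if m = k then E k else 0 := by
    intro k hk
    rw [← Finset.mul_sum]
    have hk1 : 1 ≤ k := (Finset.mem_Icc.mp hk).1
    have := omegaT_tBasis k hk1 m
    unfold OmegaT at this
    rw [this]
    by_cases h : m = k <;> simp [h]
  rw [Finset.sum_congr rfl this, Finset.sum_ite_eq]

lemma key (x E : ℕ → ℝ) (n m : ℕ) :
    OmegaT (x - fun j => ∑ k ∈ Finset.Icc 1 n, E k * tBasis k j) m
      = OmegaT x m - (if m ∈ Finset.Icc 1 n then E m else 0) := by
  rw [omegaT_sub, omegaT_partial]

lemma omegaT_zero (x : ℕ → ℝ) : OmegaT x 0 = 0 := by simp [OmegaT]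

/-- Schauder-basis expansion in `c₀(Ω)`: every `x ∈ c₀(Ω)` has the norm-convergent
representation `x = ∑ₖ Eₖ t⁽ᵏ⁾` with `Eₖ = (Ωx)ₖ`, and the coefficients in any such
norm-convergent representation are uniquely determined. -/
theorem cZeroOmega_schauder_basis (x : ℕ → ℝ)
    (hx : Tendsto (OmegaT x) atTop (𝓝 0)) :
    Tendsto (fun n => omegaNorm (x - fun j => ∑ k ∈ Finset.Icc 1 n, OmegaT x k * tBasis k j))
      atTop (𝓝 0) ∧
    ∀ E : ℕ → ℝ,
      Tendsto (fun n => omegaNorm (x - fun j => ∑ k ∈ Finset.Icc 1 n, E k * tBasis k j))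
        atTop (𝓝 0) → ∀ k : ℕ, 1 ≤ k → E k = OmegaT x k := by
  constructor
  · rw [Metric.tendsto_atTop]
    intro ε hε
    rw [Metric.tendsto_atTop] at hx
    obtain ⟨N, hN⟩ := hx (ε / 2) (by linarith)
    refine ⟨N, fun n hn => ?_⟩
    have hnonneg : 0 ≤ omegaNorm (x - fun j => ∑ k ∈ Finset.Icc 1 n, OmegaT x k * tBasis k j) :=
      Real.iSup_nonneg fun m => abs_nonneg _
    have hub : omegaNorm (x - fun j => ∑ k ∈ Finset.Icc 1 n, OmegaT x k * tBasis k j) ≤ ε / 2 := by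
      apply ciSup_le
      intro m
      rw [key]
      by_cases hm : m ∈ Finset.Icc 1 n
      · simp [hm]; linarith
      · simp only [hm, if_false, sub_zero]
        rcases Nat.eq_zero_or_pos m with h0 | h0
        · rw [h0, omegaT_zero]; simp; linarith
        · have hmn : N ≤ m := by
            simp only [Finset.mem_Icc, not_and, not_le] at hm
            omega
          have := hN m hmn
          rw [Real.dist_eq, sub_zero] at this
          linarith
    rw [Real.dist_eq, sub_zero, abs_of_nonneg hnonneg]
    linarith
  · intro E hE k hk
    have habs : Tendsto (fun m => |OmegaT x m|) atTop (𝓝 0) := by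
      have := hx.abs
      simpa using this
    obtain ⟨C, hC⟩ := habs.bddAbove_range
    have hC' : ∀ m, |OmegaT x m| ≤ C := fun m => hC ⟨m, rfl⟩
    have hle : ∀ n, k ≤ n →
        |OmegaT x k - E k| ≤ omegaNorm (x - fun j => ∑ i ∈ Finset.Icc 1 n, E i * tBasis i j) := by
      intro n hn
      have hbdd : BddAbove (Set.range fun m =>
          |OmegaT (x - fun j => ∑ i ∈ Finset.Icc 1 n, E i * tBasis i j) m|) := by
        refine ⟨C + ∑ i ∈ Finset.Icc 1 n, |E i|, ?_⟩
        rintro y ⟨m, rfl⟩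
        dsimp only
        rw [key]
        calc |OmegaT x m - (if m ∈ Finset.Icc 1 n then E m else 0)|
            ≤ |OmegaT x m| + |if m ∈ Finset.Icc 1 n then E m else 0| := abs_sub _ _
          _ ≤ C + ∑ i ∈ Finset.Icc 1 n, |E i| := by
              gcongr
              · exact hC' m
              · by_cases hm : m ∈ Finset.Icc 1 n
                · simp only [hm, if_true]
                  exact Finset.single_le_sum (fun i _ => abs_nonneg (E i)) hm
                · simp only [hm, if_false, abs_zero]
                  exact Finset.sum_nonneg fun i _ => abs_nonneg _
      have hk' : k ∈ Finset.Icc 1 n := Finset.mem_Icc.mpr ⟨hk, hn⟩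
      have := le_ciSup hbdd k
      rw [key, if_pos hk'] at this
      exact this
    have : |OmegaT x k - E k| ≤ 0 := by
      apply ge_of_tendsto hE
      filter_upwards [eventually_ge_atTop k] with n hn using hle n hn
    have h0 : OmegaT x k - E k = 0 := by
      have := abs_nonneg (OmegaT x k - E k)
      have habs0 : |OmegaT x k - E k| = 0 := le_antisymm ‹_› ‹_›
      exact abs_eq_zero.mp habs0
    linarith
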